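/- Let a, b, c, d be integers with ad - bc = 1 and c > 0. Then ω(a,b,c,d) = (a+d)/c + 12·s(-d,c) is an integer, where s(-d,c) is the Dedekind sum. -/

import Mathlib

noncomputable def dedekindSum (h k : ℤ) : ℝ :=
  ∑ r ∈ Finset.Ico (1 : ℤ) k,
    ((r : ℝ) / k) * ((h * r : ℝ) / k - ⌊(h * r : ℝ) / k⌋ - 1 / 2)

private lemma ico_succ (a n : ℤ) (h : a ≤ n) :
    Finset.Ico a (n + 1) = insert n (Finset.Ico a n) := by
  ext x; simp only [Finset.mem_Ico, Finset.mem_insert]; omega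

private lemma gauss_sums (c : ℤ) (hc : 1 ≤ c) :
    2 * (∑ r ∈ Finset.Ico (1:ℤ) c, r) = c * (c - 1) ∧
    6 * (∑ r ∈ Finset.Ico (1:ℤ) c, r ^ 2) = c * (c - 1) * (2 * c - 1) := by
  refine Int.le_induction (motive := fun c _ => 2 * (∑ r ∈ Finset.Ico (1:ℤ) c, r) = c * (c - 1) ∧
      6 * (∑ r ∈ Finset.Ico (1:ℤ) c, r ^ 2) = c * (c - 1) * (2 * c - 1)) ?_ ?_ c hc
  · simp
  · intro n hn ih
    rw [ico_succ 1 n hn, Finset.sum_insert (by simp), Finset.sum_insert (by simp)]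
    constructor
    · linear_combination ih.1
    · linear_combination ih.2

private lemma floor_int_div (m c : ℤ) (hc : 0 < c) :
    ⌊(m : ℝ) / (c : ℝ)⌋ = m / c := by
  obtain ⟨n, rfl⟩ : ∃ n : ℕ, c = (n : ℤ) := ⟨c.toNat, (Int.toNat_of_nonneg hc.le).symm⟩
  rw [show ((m : ℝ) / ((n : ℤ) : ℝ)) = (((m / (n:ℕ) : ℚ)) : ℝ) by push_cast; ring,
    Rat.floor_cast, Rat.floor_intCast_div_natCast]

private lemma fract_eq_emod (m c : ℤ) (hc : 0 < c) :
    (m : ℝ) / c - ⌊(m : ℝ) / (c : ℝ)⌋ = ((m % c : ℤ) : ℝ) / c := by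
  rw [floor_int_div m c hc, Int.emod_def]
  have hc' : (c : ℝ) ≠ 0 := by positivity
  push_cast
  field_simp

private lemma dedekind_eq (h c : ℤ) (hc : 0 < c) :
    dedekindSum h c =
      ((∑ r ∈ Finset.Ico (1:ℤ) c, r * ((h * r) % c) : ℤ) : ℝ) / (c:ℝ)^2
        - ((c:ℝ) - 1) / 4 := by
  have hc' : (c : ℝ) ≠ 0 := by positivity
  have hsum : ∀ r ∈ Finset.Ico (1:ℤ) c,
      ((r : ℝ) / c) * ((h * r : ℝ) / c - ⌊(h * r : ℝ) / c⌋ - 1 / 2)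
        = ((r * ((h * r) % c) : ℤ) : ℝ) / (c:ℝ)^2 - (r : ℝ) / (2 * c) := by
    intro r _
    rw [show ((h * r : ℝ) / c) = (((h*r : ℤ) : ℝ)) / c by push_cast; ring]
    have hf := fract_eq_emod (h * r) c hc
    rw [show (((h*r : ℤ) : ℝ)) / c - ⌊(((h*r : ℤ) : ℝ)) / c⌋ - 1/2
        = ((((h*r) % c : ℤ) : ℝ) / c) - 1/2 by rw [← hf]]
    push_cast
    field_simp
  rw [dedekindSum, Finset.sum_congr rfl hsum, Finset.sum_sub_distrib]
  have h2 := (gauss_sums c hc).1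
  have h2R : 2 * ((∑ r ∈ Finset.Ico (1:ℤ) c, r : ℤ) : ℝ) = (c:ℝ) * ((c:ℝ) - 1) := by
    exact_mod_cast congrArg (Int.cast : ℤ → ℝ) h2
  rw [← Finset.sum_div, ← Finset.sum_div, ← Int.cast_sum]
  rw [show (∑ r ∈ Finset.Ico (1:ℤ) c, ((r:ℝ))) = ((∑ r ∈ Finset.Ico (1:ℤ) c, r : ℤ) : ℝ) by
    push_cast; rfl]
  rw [show ((∑ r ∈ Finset.Ico (1:ℤ) c, r : ℤ) : ℝ) = (c:ℝ) * ((c:ℝ) - 1) / 2 by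
    linarith [h2R]]
  field_simp
  ring

private lemma perm_sum_sq (h c : ℤ) (hc : 0 < c) (hcop : IsCoprime h c) :
    ∑ r ∈ Finset.Ico (1:ℤ) c, ((h * r) % c) ^ 2 = ∑ r ∈ Finset.Ico (1:ℤ) c, r ^ 2 := by
  obtain ⟨u, v, huv⟩ := hcop
  have hcop' : IsCoprime c h := isCoprime_comm.mp ⟨u, v, huv⟩
  have mem : ∀ g r : ℤ, r ∈ Finset.Ico (1:ℤ) c → IsCoprime c g →
      (g * r) % c ∈ Finset.Ico (1:ℤ) c := by
    intro g r hr hg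
    simp only [Finset.mem_Ico] at hr ⊢
    have h1 : 0 ≤ (g * r) % c := Int.emod_nonneg _ (by omega)
    have h2 : (g * r) % c < c := Int.emod_lt_of_pos _ hc
    refine ⟨?_, h2⟩
    by_contra hcon
    have hz : (g * r) % c = 0 := by omega
    have hdvd : c ∣ g * r := Int.dvd_of_emod_eq_zero hz
    have : c ∣ r := hg.dvd_of_dvd_mul_left hdvd
    have := Int.le_of_dvd (by omega) this
    omega
  have inv : ∀ g g' r : ℤ, r ∈ Finset.Ico (1:ℤ) c → g * g' % c = 1 % c →
      (g' * ((g * r) % c)) % c = r := by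
    intro g g' r hr hgg
    simp only [Finset.mem_Ico] at hr
    have : (g' * ((g * r) % c)) % c = (g' * (g * r)) % c := by
      rw [Int.mul_emod, Int.emod_emod_of_dvd _ dvd_rfl, ← Int.mul_emod]
    rw [this, show g' * (g * r) = (g * g') * r by ring, Int.mul_emod, hgg,
      ← Int.mul_emod, one_mul, Int.emod_eq_of_lt (by omega) hr.2]
  have hu : h * u % c = 1 % c := by
    have h1 : (1:ℤ) % c = (u * h + v * c) % c := by rw [huv]
    rw [h1, Int.add_mul_emod_self_right, mul_comm]
  have hu' : u * h % c = 1 % c := by rw [mul_comm]; exact hu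
  have hcopu : IsCoprime c u := by
    refine ⟨v, h, ?_⟩
    linear_combination huv
  refine Finset.sum_nbij' (fun r => (h * r) % c) (fun r => (u * r) % c) ?_ ?_ ?_ ?_ ?_
  · intro r hr; exact mem h r hr hcop'
  · intro r hr; exact mem u r hr hcopu
  · intro r hr; exact inv h u r hr hu
  · intro r hr; exact inv u h r hr hu'
  · intro r _; rfl

theorem omega_is_integer (a b c d : ℤ) (h : a * d - b * c = 1) (hc : 0 < c) :
    ∃ m : ℤ, ((a + d : ℝ) / c + 12 * dedekindSum (-d) c) = m := by
  set S1 : ℤ := ∑ r ∈ Finset.Ico (1:ℤ) c, r * (((-d) * r) % c) with hS1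
  set Q : ℤ := ∑ r ∈ Finset.Ico (1:ℤ) c, r ^ 2 with hQ
  have hcop : IsCoprime (-d : ℤ) c := ⟨-a, -b, by linear_combination h⟩
  -- Step A/B: c^2 ∣ (d^2+1)*Q + 2*d*S1
  have stepA : (c^2 : ℤ) ∣ ∑ r ∈ Finset.Ico (1:ℤ) c, ((-d) * r - ((-d) * r) % c) ^ 2 := by
    apply Finset.dvd_sum
    intro r _
    have : (-d) * r - ((-d) * r) % c = c * ((-d) * r / c) := by
      rw [Int.emod_def]; ring
    rw [this, mul_pow]
    exact Dvd.intro _ rfl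
  have expand : ∑ r ∈ Finset.Ico (1:ℤ) c, ((-d) * r - ((-d) * r) % c) ^ 2
      = (d^2 + 1) * Q - 2 * (-d) * S1 := by
    have hperm := perm_sum_sq (-d) c hc hcop
    calc ∑ r ∈ Finset.Ico (1:ℤ) c, ((-d) * r - ((-d) * r) % c) ^ 2
        = ∑ r ∈ Finset.Ico (1:ℤ) c,
            (d^2 * r^2 - 2 * (-d) * (r * (((-d) * r) % c)) + (((-d)*r) % c)^2) := by
          apply Finset.sum_congr rfl; intro r _; ring
      _ = d^2 * Q - 2 * (-d) * S1 + Q := by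
          rw [Finset.sum_add_distrib, Finset.sum_sub_distrib, hperm,
            ← Finset.mul_sum, ← Finset.mul_sum]
      _ = (d^2 + 1) * Q - 2 * (-d) * S1 := by ring
  rw [expand] at stepA
  -- multiply by 6 and use gauss sum
  have hQ6 : 6 * Q = c * (c - 1) * (2 * c - 1) := (gauss_sums c hc).2
  have stepC : (c^2 : ℤ) ∣ (d^2 + 1) * (c * (c-1) * (2*c-1)) + 12 * d * S1 := by
    have := Dvd.dvd.mul_left stepA 6
    have heq : 6 * ((d^2 + 1) * Q - 2 * (-d) * S1)
        = (d^2 + 1) * (c * (c-1) * (2*c-1)) + 12 * d * S1 := by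
      linear_combination (d^2 + 1) * hQ6
    rwa [heq] at this
  -- Step D
  have stepD : (d^2+1) * (c * (c-1) * (2*c-1)) - d * (a+d) * c
      = c^2 * (d * (a+d) * (2*c-3) - b * (c-1) * (2*c-1)) := by
    linear_combination (-c - c^2*(2*c-3)) * h
  have stepE : (c^2 : ℤ) ∣ d * (12 * S1 + (a + d) * c) := by
    have : (c^2 : ℤ) ∣ ((d^2 + 1) * (c * (c-1) * (2*c-1)) + 12 * d * S1)
        - ((d^2+1) * (c * (c-1) * (2*c-1)) - d * (a+d) * c) :=
      dvd_sub stepC (stepD ▸ Dvd.intro _ rfl)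
    have heq : ((d^2 + 1) * (c * (c-1) * (2*c-1)) + 12 * d * S1)
        - ((d^2+1) * (c * (c-1) * (2*c-1)) - d * (a+d) * c)
        = d * (12 * S1 + (a + d) * c) := by ring
    rwa [heq] at this
  have hcop2 : IsCoprime (c^2 : ℤ) d := by
    have : IsCoprime c d := ⟨-b, a, by linear_combination h⟩
    exact this.pow_left
  have stepF : (c^2 : ℤ) ∣ 12 * S1 + (a + d) * c := hcop2.dvd_of_dvd_mul_left stepE
  obtain ⟨k, hk⟩ := stepF
  refine ⟨k - 3 * (c - 1), ?_⟩
  rw [dedekind_eq (-d) c hc, ← hS1]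
  have hc' : (c : ℝ) ≠ 0 := by positivity
  have hkR : 12 * (S1 : ℝ) + ((a : ℝ) + d) * c = (c:ℝ)^2 * k := by
    exact_mod_cast congrArg (Int.cast : ℤ → ℝ) hk
  push_cast
  field_simp
  linear_combination 4 * hkR
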